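/- Let m ≥ 1, let τ ∈ ℂ, and let α : Fin m → ℂ. Let U be an n×n complex unitary matrix whose minimal polynomial over ℂ is X^m − τ, and suppose that the matrix V := Σ_{i=0}^{m−1} α_i U^i is unitary. Then the τ-twisted circulant matrix C(τ, α) is a unitary m×m matrix. -/

import Mathlib

open Matrix Polynomial

/-- The τ-twisted circulant matrix: entry (k, j) equals τ·α_{(j−k) mod m} if j < k,
and α_{(j−k) mod m} if j ≥ k (Fin subtraction is subtraction mod m). -/
def twistedCirculant (m : ℕ) (τ : ℂ) (α : Fin m → ℂ) : Matrix (Fin m) (Fin m) ℂ :=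
  fun k j => if (j : ℕ) < (k : ℕ) then τ * α (j - k) else α (j - k)

theorem stmt0 {n m : ℕ} (hm : 1 ≤ m) (τ : ℂ) (α : Fin m → ℂ)
    (U : Matrix (Fin n) (Fin n) ℂ)
    (hU : U * Uᴴ = 1 ∧ Uᴴ * U = 1)
    (hmin : minpoly ℂ U = X ^ m - Polynomial.C τ)
    (V : Matrix (Fin n) (Fin n) ℂ)
    (hV : V = ∑ i : Fin m, α i • U ^ (i : ℕ))
    (hVunitary : V * Vᴴ = 1 ∧ Vᴴ * V = 1) :
    twistedCirculant m τ α * (twistedCirculant m τ α)ᴴ = 1 ∧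
      (twistedCirculant m τ α)ᴴ * twistedCirculant m τ α = 1 := by
  haveI : NeZero m := ⟨by omega⟩
  obtain ⟨hU1, hU2⟩ := hU
  -- U ^ m = τ • 1
  have hUm : U ^ m = τ • (1 : Matrix (Fin n) (Fin n) ℂ) := by
    have h := minpoly.aeval ℂ U
    rw [hmin, map_sub, aeval_X_pow, aeval_C, sub_eq_zero,
      Algebra.algebraMap_eq_smul_one] at h
    exact h
  -- n is positive
  have hn : 0 < n := by
    by_contra h
    have hn0 : n = 0 := by omega
    subst hn0
    have h1 : (aeval U (1 : ℂ[X])) = 0 := Subsingleton.elim _ _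
    have hd := minpoly.dvd ℂ U h1
    have h2 := Polynomial.natDegree_le_of_dvd hd one_ne_zero
    rw [hmin, natDegree_X_pow_sub_C] at h2
    simp at h2
    omega
  haveI : Nonempty (Fin n) := ⟨⟨0, hn⟩⟩
  -- U is unitary
  have hUmem : U ∈ unitary (Matrix (Fin n) (Fin n) ℂ) := Unitary.mem_iff.2 ⟨hU2, hU1⟩
  have hpow : ∀ k : ℕ, (Uᴴ) ^ k * U ^ k = 1 ∧ U ^ k * (Uᴴ) ^ k = 1 := by
    intro k
    have h := Unitary.mem_iff.1 (pow_mem hUmem k)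
    rw [star_pow] at h
    exact h
  -- star τ * τ = 1
  have hτ : star τ * τ = 1 := by
    have h := (hpow m).1
    rw [hUm] at h
    have hs : (Uᴴ) ^ m = star τ • (1 : Matrix (Fin n) (Fin n) ℂ) := by
      rw [← Matrix.star_eq_conjTranspose, ← star_pow, hUm, star_smul, star_one]
    rw [hs] at h
    have h2 : (star τ * τ) • (1 : Matrix (Fin n) (Fin n) ℂ) = 1 := by
      rw [smul_mul_assoc, one_mul, smul_smul] at h
      exact h
    have := congrFun (congrFun h2 ⟨0, hn⟩) ⟨0, hn⟩
    simpa [Matrix.one_apply] using this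
  have hττ : τ * star τ = 1 := by rw [mul_comm]; exact hτ
  -- injectivity of c ↦ ∑ c i • U^i
  have hinj : ∀ c : Fin m → ℂ, (∑ i : Fin m, c i • U ^ (i : ℕ)) = 0 → c = 0 := by
    intro c hc
    set p : ℂ[X] := ∑ i : Fin m, Polynomial.C (c i) * X ^ (i : ℕ) with hp
    have hev : aeval U p = 0 := by
      rw [hp, map_sum]
      rw [← hc]
      refine Finset.sum_congr rfl fun i _ => ?_
      rw [_root_.map_mul, aeval_C, aeval_X_pow, Algebra.algebraMap_eq_smul_one, smul_mul_assoc,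
        one_mul]
    have hd := minpoly.dvd ℂ U hev
    rw [hmin] at hd
    have hdeg : p.natDegree < m := by
      have : p.natDegree ≤ m - 1 := by
        refine Polynomial.natDegree_sum_le_of_forall_le _ _ fun i _ => ?_
        refine le_trans (Polynomial.natDegree_C_mul_le _ _) ?_
        rw [natDegree_X_pow]
        omega
      omega
    have hp0 : p = 0 := by
      refine Polynomial.eq_zero_of_dvd_of_natDegree_lt hd ?_
      rwa [natDegree_X_pow_sub_C]
    funext i
    have hco : p.coeff (i : ℕ) = c i := by
      rw [hp, Polynomial.finset_sum_coeff]
      rw [Finset.sum_eq_single i]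
      · simp [coeff_C_mul, coeff_X_pow]
      · intro j _ hji
        rw [coeff_C_mul, coeff_X_pow, if_neg, mul_zero]
        exact fun h => hji (Fin.ext h.symm)
      · simp
    rw [hp0] at hco
    simpa using hco.symm
  have hinj' : ∀ c d : Fin m → ℂ,
      (∑ i : Fin m, c i • U ^ (i : ℕ)) = (∑ i : Fin m, d i • U ^ (i : ℕ)) → c = d := by
    intro c d h
    have h2 : (∑ i : Fin m, (c - d) i • U ^ (i : ℕ)) = 0 := by
      simp only [Pi.sub_apply, sub_smul, Finset.sum_sub_distrib, h, sub_self]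
    have := hinj _ h2
    exact sub_eq_zero.1 (funext fun i => congrFun this i)
  -- multiplicativity
  have hmul : ∀ δ γ : Fin m → ℂ,
      (∑ j : Fin m, (δ ᵥ* twistedCirculant m τ γ) j • U ^ (j : ℕ)) =
        (∑ k : Fin m, δ k • U ^ (k : ℕ)) * (∑ i : Fin m, γ i • U ^ (i : ℕ)) := by
    intro δ γ
    rw [Finset.sum_mul]
    have lhs_eq : (∑ j : Fin m, (δ ᵥ* twistedCirculant m τ γ) j • U ^ (j : ℕ)) =
        ∑ k : Fin m, ∑ j : Fin m, (δ k * twistedCirculant m τ γ k j) • U ^ (j : ℕ) := by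
      rw [Finset.sum_comm]
      refine Finset.sum_congr rfl fun j _ => ?_
      rw [← Finset.sum_smul]
      rfl
    rw [lhs_eq]
    refine Finset.sum_congr rfl fun k _ => ?_
    rw [Finset.mul_sum]
    rw [← Equiv.sum_comp (Equiv.addLeft k) (fun j => (δ k * twistedCirculant m τ γ k j) • U ^ (j : ℕ))]
    refine Finset.sum_congr rfl fun i _ => ?_
    have hsub : k + i - k = i := by
      simp
    have hadd : ((k + i : Fin m) : ℕ) = ((k : ℕ) + (i : ℕ)) % m := by
      rw [Fin.add_def]
    have hcond : (((k + i : Fin m) : ℕ) < (k : ℕ)) ↔ m ≤ (k : ℕ) + (i : ℕ) := by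
      rw [hadd]
      rcases Nat.lt_or_ge ((k : ℕ) + (i : ℕ)) m with h | h
      · rw [Nat.mod_eq_of_lt h]; omega
      · have hi := i.isLt
        have hk := k.isLt
        have : ((k : ℕ) + (i : ℕ)) % m = (k : ℕ) + (i : ℕ) - m := by
          rw [Nat.mod_eq_sub_mod h, Nat.mod_eq_of_lt (by omega)]
        rw [this]
        omega
    show (δ k * twistedCirculant m τ γ k (Equiv.addLeft k i)) • U ^ (((Equiv.addLeft k) i : Fin m) : ℕ) = _
    have heq : (Equiv.addLeft k) i = k + i := by
      simp [Equiv.addLeft, add_comm]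
    rw [heq]
    unfold twistedCirculant
    rw [hsub]
    rcases Nat.lt_or_ge ((k : ℕ) + (i : ℕ)) m with h | h
    · rw [if_neg (by rw [hcond]; omega)]
      rw [hadd, Nat.mod_eq_of_lt h, pow_add]
      rw [smul_mul_assoc, Matrix.mul_smul, smul_smul]
    · rw [if_pos (hcond.2 h)]
      have hval : ((k + i : Fin m) : ℕ) = (k : ℕ) + (i : ℕ) - m := by
        have hi := i.isLt
        have hk := k.isLt
        rw [hadd, Nat.mod_eq_sub_mod h, Nat.mod_eq_of_lt (by omega)]
      rw [hval]
      have hUpow : U ^ ((k : ℕ) + (i : ℕ)) = τ • U ^ ((k : ℕ) + (i : ℕ) - m) := by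
        have h2 : U ^ (((k : ℕ) + (i : ℕ) - m) + m) = τ • U ^ ((k : ℕ) + (i : ℕ) - m) := by
          rw [pow_add, hUm, Matrix.mul_smul, mul_one]
        rw [← h2]
        congr 1
        omega
      rw [smul_mul_assoc, Matrix.mul_smul, smul_smul, ← pow_add]
      have : (k : ℕ) + (i : ℕ) = ((k : ℕ) + (i : ℕ)) := rfl
      rw [hUpow, smul_smul]
      ring_nf
  -- the twisted vector for Vᴴ
  set β : Fin m → ℂ := fun j => if j = 0 then star (α 0) else star τ * star (α (-j)) with hβ
  have hVH : Vᴴ = ∑ j : Fin m, β j • U ^ (j : ℕ) := by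
    rw [hV, conjTranspose_sum]
    simp only [conjTranspose_smul, conjTranspose_pow]
    rw [← Equiv.sum_comp (Equiv.neg (Fin m)) (fun i => star (α i) • (Uᴴ) ^ (i : ℕ))]
    refine Finset.sum_congr rfl fun j _ => ?_
    show star (α (-j)) • (Uᴴ) ^ (((-j : Fin m)) : ℕ) = β j • U ^ (j : ℕ)
    by_cases hj : j = 0
    · subst hj; simp [hβ]
    · have hjv : ((-j : Fin m) : ℕ) = m - (j : ℕ) := by
        have h0 : (0 : Fin m) - j = -j := by rw [zero_sub]
        rw [← h0, Fin.sub_def]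
        simp only [Fin.val_zero, add_zero]
        have hjlt := j.isLt
        have hjne : (j : ℕ) ≠ 0 := fun h => hj (Fin.ext h)
        rw [Nat.mod_eq_of_lt (by omega)]
      rw [hjv]
      have hkey : (Uᴴ) ^ (m - (j : ℕ)) = star τ • U ^ (j : ℕ) := by
        have h1 : U ^ (m - (j : ℕ)) * (star τ • U ^ (j : ℕ)) = 1 := by
          rw [Matrix.mul_smul, ← pow_add]
          have : m - (j : ℕ) + (j : ℕ) = m := by
            have := j.isLt; omega
          rw [this, hUm, smul_smul, hτ, one_smul]
        calc (Uᴴ) ^ (m - (j : ℕ))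
            = (Uᴴ) ^ (m - (j : ℕ)) * (U ^ (m - (j : ℕ)) * (star τ • U ^ (j : ℕ))) := by
              rw [h1, mul_one]
          _ = star τ • U ^ (j : ℕ) := by
              rw [← mul_assoc, (hpow (m - (j : ℕ))).1, one_mul]
      rw [hkey, smul_smul, hβ]
      simp only [hj, if_false, ite_false]
      rw [mul_comm]
  -- conjTranspose of the twisted circulant is the twisted circulant of β
  have hCH : (twistedCirculant m τ α)ᴴ = twistedCirculant m τ β := by
    ext k j
    simp only [conjTranspose_apply, twistedCirculant]
    rcases lt_trichotomy ((j : ℕ)) ((k : ℕ)) with h | h | h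
    · rw [if_neg (by omega), if_pos h]
      have hjk : j - k ≠ 0 := by
        intro h0
        have : j = k := by
          have := sub_eq_zero.1 h0
          exact this
        rw [this] at h; omega
      rw [hβ]
      simp only [hjk, if_neg, ite_false]
      rw [neg_sub]
      rw [← mul_assoc, hττ, one_mul]
    · have hjk : j = k := Fin.ext h
      subst hjk
      rw [if_neg (by omega), if_neg (by omega)]
      rw [hβ]
      simp
    · rw [if_pos h, if_neg (by omega)]
      have hjk : j - k ≠ 0 := by
        intro h0
        have : j = k := sub_eq_zero.1 h0
        rw [this] at h; omega
      rw [hβ]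
      simp only [hjk, ite_false]
      rw [neg_sub, star_mul', mul_comm]
  -- main computation: rows of Cᴴ * C agree with rows of 1
  have key : (twistedCirculant m τ α)ᴴ * twistedCirculant m τ α = 1 := by
    have hrow : ∀ δ : Fin m → ℂ, δ ᵥ* ((twistedCirculant m τ α)ᴴ * twistedCirculant m τ α) = δ := by
      intro δ
      apply hinj'
      rw [← Matrix.vecMul_vecMul]
      rw [hmul]
      have h1 : (∑ j : Fin m, (δ ᵥ* (twistedCirculant m τ α)ᴴ) j • U ^ (j : ℕ)) =
          (∑ k : Fin m, δ k • U ^ (k : ℕ)) * Vᴴ := by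
        rw [hCH, hmul, hVH]
      rw [h1, mul_assoc, ← hV, hVunitary.2, mul_one]
    ext k j
    have := congrFun (hrow (Pi.single k 1)) j
    rw [Matrix.single_one_vecMul] at this
    change ((twistedCirculant m τ α)ᴴ * twistedCirculant m τ α) k j = (Pi.single k (1 : ℂ) : Fin m → ℂ) j at this
    rw [this, Matrix.one_apply, Pi.single_apply]
    simp [eq_comm]
  exact ⟨mul_eq_one_comm.2 key, key⟩
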